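/- In the probability frame obtained from a type space by setting Ω := X × T and Pr_i(x,t) := β_i(t_i), the introspection condition holds: for every (x,t), the outer measure of the set {(x',t') : β_i(t'_i) = β_i(t_i)} under β_i(t_i) equals 1. -/

import Mathlib

open MeasureTheory ENNReal

/-- The outer measure induced by `μ`: the infimum of `μ E` over measurable `E ⊇ A`. -/
noncomputable def outerOf {X : Type*} [MeasurableSpace X] (μ : Measure X) (A : Set X) : ℝ≥0∞ :=
  ⨅ (E : Set X) (_ : A ⊆ E) (_ : MeasurableSet E), μ E

section Aux

variable {I X : Type*} [Fintype I] [MeasurableSpace X]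
    {T : I → Type*} [∀ i, MeasurableSpace (T i)]

/-- Pushing forward by "replace coordinate `i` with `ti`" preserves any measure whose
`i`-th marginal is `dirac ti`. -/
lemma map_update_eq [DecidableEq I] (μ : Measure (X × ∀ j, T j)) [IsProbabilityMeasure μ] (i : I) (ti : T i)
    (hmarg : Measure.map (fun p : X × ∀ j, T j => p.2 i) μ = Measure.dirac ti) :
    Measure.map (fun p : X × ∀ j, T j => (p.1, Function.update p.2 i ti)) μ = μ := by
  classical
  set f : (X × ∀ j, T j) → X × ∀ j, T j :=
    fun p => (p.1, Function.update p.2 i ti) with hf_def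
  have hf : Measurable f := by
    apply measurable_fst.prodMk
    exact measurable_update'.comp (measurable_snd.prodMk measurable_const)
  have hprojmeas : Measurable (fun p : X × ∀ j, T j => p.2 i) :=
    (measurable_pi_apply i).comp measurable_snd
  have hproj : ∀ S : Set (T i), MeasurableSet S →
      μ ((fun p : X × ∀ j, T j => p.2 i) ⁻¹' S) = if ti ∈ S then 1 else 0 := by
    intro S hS
    have := congrArg (fun ν : Measure (T i) => ν S) hmarg
    simpa [Measure.map_apply hprojmeas hS, Measure.dirac_apply' _ hS,
      Set.indicator_apply] using this
  haveI : IsProbabilityMeasure (Measure.map f μ) := Measure.isProbabilityMeasure_map hf.aemeasurable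
  refine ext_of_generate_finite
    (Set.image2 (· ×ˢ ·) { s : Set X | MeasurableSet s }
      (Set.pi Set.univ '' Set.pi Set.univ fun j => { s : Set (T j) | MeasurableSet s }))
    ?_ ?_ ?_ ?_
  · exact (generateFrom_eq_prod MeasurableSpace.generateFrom_measurableSet generateFrom_pi
      isCountablySpanning_measurableSet
      (IsCountablySpanning.pi fun _ => isCountablySpanning_measurableSet)).symm
  · exact MeasurableSpace.isPiSystem_measurableSet.prod isPiSystem_pi
  · rintro _ ⟨C, hC, _, ⟨S, hS, rfl⟩, rfl⟩
    have hSmeas : ∀ j, MeasurableSet (S j) := fun j => hS j (Set.mem_univ j)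
    have hbox : MeasurableSet (C ×ˢ Set.pi Set.univ S) :=
      hC.prod (MeasurableSet.univ_pi hSmeas)
    rw [Measure.map_apply hf hbox]
    by_cases hti : ti ∈ S i
    · -- `box ⊆ f ⁻¹' box` and the difference is contained in `{p | p.2 i ∉ S i}`, a null set
      have hsub : C ×ˢ Set.pi Set.univ S ⊆ f ⁻¹' (C ×ˢ Set.pi Set.univ S) := by
        rintro ⟨x, s⟩ ⟨h1, h2⟩
        refine ⟨h1, fun j _ => ?_⟩
        by_cases hj : j = i
        · subst hj; simpa [hf_def] using hti
        · simpa [Function.update_of_ne hj, hf_def] using h2 j (Set.mem_univ j)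
      have hdiff : f ⁻¹' (C ×ˢ Set.pi Set.univ S) \ C ×ˢ Set.pi Set.univ S ⊆
          (fun p : X × ∀ j, T j => p.2 i) ⁻¹' (S i)ᶜ := by
        rintro ⟨x, s⟩ ⟨⟨h1, h2⟩, h3⟩
        by_contra hmem
        simp only [Set.mem_preimage, Set.mem_compl_iff, not_not] at hmem
        refine h3 ⟨h1, fun j _ => ?_⟩
        by_cases hj : j = i
        · subst hj; exact hmem
        · simpa [Function.update_of_ne hj, hf_def] using h2 j (Set.mem_univ j)
      have hnull : μ ((fun p : X × ∀ j, T j => p.2 i) ⁻¹' (S i)ᶜ) = 0 := by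
        rw [hproj _ (hSmeas i).compl]; simp [hti]
      have hdiffnull : μ (f ⁻¹' (C ×ˢ Set.pi Set.univ S) \ C ×ˢ Set.pi Set.univ S) = 0 :=
        le_antisymm ((measure_mono hdiff).trans hnull.le) (zero_le)
      refine le_antisymm ?_ (measure_mono hsub)
      calc μ (f ⁻¹' (C ×ˢ Set.pi Set.univ S))
          = μ (C ×ˢ Set.pi Set.univ S ∪
              (f ⁻¹' (C ×ˢ Set.pi Set.univ S) \ C ×ˢ Set.pi Set.univ S)) := by
            rw [Set.union_diff_cancel hsub]
        _ ≤ μ (C ×ˢ Set.pi Set.univ S) +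
              μ (f ⁻¹' (C ×ˢ Set.pi Set.univ S) \ C ×ˢ Set.pi Set.univ S) := measure_union_le _ _
        _ = μ (C ×ˢ Set.pi Set.univ S) := by rw [hdiffnull, add_zero]
    · -- both sides are zero
      have h1 : f ⁻¹' (C ×ˢ Set.pi Set.univ S) = ∅ := by
        ext ⟨x, s⟩
        simp only [Set.mem_preimage, Set.mem_prod, Set.mem_pi, Set.mem_empty_iff_false,
          iff_false, not_and]
        intro _ h
        exact hti (by simpa [hf_def] using h i (Set.mem_univ i))
      have h2 : C ×ˢ Set.pi Set.univ S ⊆ (fun p : X × ∀ j, T j => p.2 i) ⁻¹' (S i) := by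
        rintro ⟨x, s⟩ ⟨_, h⟩
        exact h i (Set.mem_univ i)
      have h3 : μ ((fun p : X × ∀ j, T j => p.2 i) ⁻¹' (S i)) = 0 := by
        rw [hproj _ (hSmeas i)]; simp [hti]
      rw [h1, measure_empty]
      exact (le_antisymm ((measure_mono h2).trans h3.le) (zero_le)).symm
  · simp

end Aux

/-- Introspection in the probability frame obtained from a type space: the outer measure,
under `β_i(t_i)`, of the set `{(x',t') : β_i(t'_i) = β_i(t_i)}` equals 1. -/
theorem stmt6 {I X : Type*} [Fintype I] [MeasurableSpace X]
    {T : I → Type*} [∀ i, MeasurableSpace (T i)]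
    (β : ∀ i, T i → Measure (X × ∀ j, T j))
    (hprob : ∀ i ti, IsProbabilityMeasure (β i ti))
    (hmarg : ∀ i ti, Measure.map (fun p : X × ∀ j, T j => p.2 i) (β i ti) = Measure.dirac ti)
    (i : I) (x : X) (t : ∀ j, T j) :
    outerOf (β i (t i)) {p : X × ∀ j, T j | β i (p.2 i) = β i (t i)} = 1 := by
  classical
  set μ := β i (t i) with hμ
  haveI : IsProbabilityMeasure μ := hprob i (t i)
  set A : Set (X × ∀ j, T j) := {p | β i (p.2 i) = β i (t i)} with hA
  have key : ∀ E : Set (X × ∀ j, T j), A ⊆ E → MeasurableSet E → μ E = 1 := by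
    intro E hAE hE
    have hmap := map_update_eq μ i (t i) (hmarg i (t i))
    have hpre : (fun p : X × ∀ j, T j => (p.1, Function.update p.2 i (t i))) ⁻¹' E =
        Set.univ := by
      ext p
      simp only [Set.mem_preimage, Set.mem_univ, iff_true]
      apply hAE
      show β i ((Function.update p.2 i (t i)) i) = β i (t i)
      rw [Function.update_self]
    have hf : Measurable (fun p : X × ∀ j, T j => (p.1, Function.update p.2 i (t i))) := by
      apply measurable_fst.prodMk
      exact measurable_update'.comp (measurable_snd.prodMk measurable_const)
    rw [← hmap, Measure.map_apply hf hE, hpre, measure_univ]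
  refine le_antisymm ?_ ?_
  · refine iInf_le_of_le Set.univ (iInf_le_of_le (Set.subset_univ _)
      (iInf_le_of_le MeasurableSet.univ ?_))
    simp
  · exact le_iInf fun E => le_iInf fun hAE => le_iInf fun hE => (key E hAE hE).ge
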